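/- For every dimension d ≥ 1, every c > 0 and every δ ∈ (0,1), one has T_{d,c}(α) ≥ β_c(α) and T_{d,c,δ}(α) ≥ β_{c,δ}(α) for every α ∈ [0,1]. -/

import Mathlib

open MeasureTheory ProbabilityTheory Real Filter Topology
open scoped NNReal ENNReal

noncomputable section

/-- The exponential distribution with rate 1 on `ℝ`. -/
def expOne : Measure ℝ :=
  (volume.restrict (Set.Ioi (0 : ℝ))).withDensity fun w => ENNReal.ofReal (Real.exp (-w))

/-- The centered Gaussian measure on `ℝ^d` with covariance matrix `σ2 • I_d`. -/
def gaussPi (d : ℕ) (σ2 : ℝ) : Measure (Fin d → ℝ) :=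
  Measure.pi fun _ => gaussianReal 0 σ2.toNNReal

/-- The symmetric multivariate Laplace distribution `SL_d(σ2 • I_d)`:
the law of `√W • X` with `W ~ Exp(1)` and `X ~ N(0, σ2 I_d)` independent. -/
def SLM (d : ℕ) (σ2 : ℝ) : Measure (Fin d → ℝ) :=
  Measure.map (fun p : ℝ × (Fin d → ℝ) => Real.sqrt p.1 • p.2) (expOne.prod (gaussPi d σ2))

/-- The zero-inflated symmetric multivariate Laplace distribution `ZIL(δ, σ2 • I_d)`:
the law of `1{ξ = 0} • S` with `ξ ~ Bernoulli(δ)` and `S ~ SL_d(σ2 I_d)` independent. -/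
def ZILM (d : ℕ) (δ : ℝ) (σ2 : ℝ) : Measure (Fin d → ℝ) :=
  ENNReal.ofReal δ • Measure.dirac (0 : Fin d → ℝ) + ENNReal.ofReal (1 - δ) • SLM d σ2

/-- The trade-off function `T(P, Q)` between two measures. -/
def tradeOff {Ω : Type*} [MeasurableSpace Ω] (P Q : Measure Ω) (α : ℝ) : ℝ :=
  sInf {b | ∃ φ : Ω → ℝ, Measurable φ ∧ (∀ ω, φ ω ∈ Set.Icc (0 : ℝ) 1) ∧
    (∫ ω, φ ω ∂P) ≤ α ∧ b = 1 - ∫ ω, φ ω ∂Q}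

/-- `T_{d,c}`: the trade-off function between `SL_d(I_d)` and `(c, 0, …, 0)ᵀ + SL_d(I_d)`. -/
def Tdc (d : ℕ) (c : ℝ) (α : ℝ) : ℝ :=
  tradeOff (SLM d 1)
    (Measure.map (fun x => (fun j : Fin d => if (j : ℕ) = 0 then c else 0) + x) (SLM d 1)) α

/-- `T_{d,c,δ}`. -/
def Tdcd (d : ℕ) (c δ : ℝ) (α : ℝ) : ℝ :=
  if α ≤ 1 - δ then (1 - δ) * Tdc d c (α / (1 - δ)) else 0

/-- The law `P` of `(√W · X₁, W)`. -/
def pairP : Measure (ℝ × ℝ) :=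
  Measure.map (fun p : ℝ × ℝ => (Real.sqrt p.1 * p.2, p.1)) (expOne.prod (gaussianReal 0 1))

/-- The law `Q` of `(c + √W · X₁, W)`. -/
def pairQ (c : ℝ) : Measure (ℝ × ℝ) :=
  Measure.map (fun p : ℝ × ℝ => (c + Real.sqrt p.1 * p.2, p.1)) (expOne.prod (gaussianReal 0 1))

/-- `β_c`: the trade-off function between the laws of `(√W·X₁, W)` and `(c + √W·X₁, W)`. -/
def betaC (c : ℝ) (α : ℝ) : ℝ := tradeOff pairP (pairQ c) α

/-- `β_{c,δ}`. -/
def betaCD (c δ : ℝ) (α : ℝ) : ℝ :=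
  if α ≤ 1 - δ then (1 - δ) * betaC c (α / (1 - δ)) else 0

/-- The standard normal cumulative distribution function `Φ`. -/
def stdNormCDF (x : ℝ) : ℝ := ((gaussianReal 0 1) (Set.Iic x)).toReal

/-- `F_c(x) = ∫₀^∞ Φ(√w·x/c + c/(2√w)) e^{−w} dw`. -/
def Fc (c x : ℝ) : ℝ :=
  ∫ w in Set.Ioi (0 : ℝ),
    stdNormCDF (Real.sqrt w * x / c + c / (2 * Real.sqrt w)) * Real.exp (-w)

/-- The quantile function of `F_c`. -/
def FcInv (c p : ℝ) : ℝ := sInf {x : ℝ | p ≤ Fc c x}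

end

noncomputable section Aux

open MeasureTheory ProbabilityTheory Real

namespace TdcAux

instance : IsProbabilityMeasure expOne := by
  constructor
  rw [expOne, withDensity_apply _ MeasurableSet.univ, Measure.restrict_univ,
    ← ofReal_integral_eq_lintegral_ofReal]
  · rw [integral_exp_neg_Ioi_zero, ENNReal.ofReal_one]
  · simpa [IntegrableOn] using exp_neg_integrableOn_Ioi 0 one_pos
  · exact Filter.Eventually.of_forall fun x => (Real.exp_pos _).le

lemma gaussPi_eq (d : ℕ) :
    gaussPi d 1 = Measure.pi fun _ : Fin d => gaussianReal 0 1 := by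
  simp [gaussPi]

instance (d : ℕ) (σ2 : ℝ) : IsProbabilityMeasure (gaussPi d σ2) := by
  rw [gaussPi]; infer_instance

lemma measurable_smul_map (d : ℕ) :
    Measurable fun p : ℝ × (Fin d → ℝ) => Real.sqrt p.1 • p.2 :=
  measurable_pi_lambda _ fun j =>
    (Real.continuous_sqrt.measurable.comp measurable_fst).mul
      ((measurable_pi_apply j).comp measurable_snd)

instance (d : ℕ) (σ2 : ℝ) : IsProbabilityMeasure (SLM d σ2) := by
  rw [SLM]; exact Measure.isProbabilityMeasure_map (measurable_smul_map d).aemeasurable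

lemma measurable_pairP_fun :
    Measurable fun p : ℝ × ℝ => (Real.sqrt p.1 * p.2, p.1) :=
  ((Real.continuous_sqrt.measurable.comp measurable_fst).mul measurable_snd).prodMk
    measurable_fst

lemma measurable_pairQ_fun (c : ℝ) :
    Measurable fun p : ℝ × ℝ => (c + Real.sqrt p.1 * p.2, p.1) :=
  (measurable_const.add
    ((Real.continuous_sqrt.measurable.comp measurable_fst).mul measurable_snd)).prodMk
    measurable_fst

instance : IsProbabilityMeasure pairP := by
  rw [pairP]; exact Measure.isProbabilityMeasure_map measurable_pairP_fun.aemeasurable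

instance (c : ℝ) : IsProbabilityMeasure (pairQ c) := by
  rw [pairQ]; exact Measure.isProbabilityMeasure_map (measurable_pairQ_fun c).aemeasurable

lemma integrable_of_Icc {Ω : Type*} [MeasurableSpace Ω] {P : Measure Ω} [IsFiniteMeasure P]
    {f : Ω → ℝ} (hf : AEStronglyMeasurable f P) (hb : ∀ ω, f ω ∈ Set.Icc (0 : ℝ) 1) :
    Integrable f P :=
  (integrable_const 1).mono' hf (Filter.Eventually.of_forall fun ω => by
    rw [Real.norm_eq_abs, abs_of_nonneg (hb ω).1]; exact (hb ω).2)

lemma integral_le_one_of {Ω : Type*} [MeasurableSpace Ω] {P : Measure Ω}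
    [IsProbabilityMeasure P] {f : Ω → ℝ} (hf : AEStronglyMeasurable f P)
    (hb : ∀ ω, f ω ∈ Set.Icc (0 : ℝ) 1) : ∫ ω, f ω ∂P ≤ 1 := by
  calc ∫ ω, f ω ∂P ≤ ∫ _ω, (1 : ℝ) ∂P :=
        integral_mono (integrable_of_Icc hf hb) (integrable_const 1) fun ω => (hb ω).2
    _ = 1 := by simp

lemma pi_fintype_irrel {ι : Type*} {α : ι → Type*} (i1 i2 : Fintype ι)
    [∀ i, MeasurableSpace (α i)] (μ : ∀ i, Measure (α i)) :
    @Measure.pi ι α i1 _ μ = @Measure.pi ι α i2 _ μ := by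
  congr 1
  exact Subsingleton.elim _ _

lemma refresh (d : ℕ) [NeZero d] {g : (Fin d → ℝ) → ℝ} (hg : Measurable g)
    (hb : ∀ y, g y ∈ Set.Icc (0 : ℝ) 1) :
    ∫ z, ∫ x, g (Function.update x 0 z) ∂(Measure.pi fun _ : Fin d => gaussianReal 0 1)
        ∂(gaussianReal 0 1)
      = ∫ x, g x ∂(Measure.pi fun _ : Fin d => gaussianReal 0 1) := by
  classical
  set μ : Measure ℝ := gaussianReal 0 1 with hμ
  set p : Fin d → Prop := fun j => j = 0 with hp
  haveI : Unique {j : Fin d // p j} :=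
    ⟨⟨⟨0, rfl⟩⟩, fun x => Subtype.ext x.2⟩
  set πA : Measure ({j : Fin d // p j} → ℝ) := Measure.pi fun _ => μ with hπA
  set πB : Measure ({j : Fin d // ¬ p j} → ℝ) := Measure.pi fun _ => μ with hπB
  set πd : Measure (Fin d → ℝ) := Measure.pi fun _ : Fin d => μ with hπd
  set e1 := MeasurableEquiv.piEquivPiSubtypeProd (fun _ : Fin d => ℝ) p with he1
  have h1 : MeasurePreserving e1 πd (πA.prod πB) := by
    rw [he1, hπd, hπA, hπB]
    have h := measurePreserving_piEquivPiSubtypeProd (fun _ : Fin d => μ) p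
    rw [pi_fintype_irrel _ _ (fun _ : {j : Fin d // p j} => μ),
      pi_fintype_irrel _ _ (fun _ : {j : Fin d // ¬ p j} => μ)] at h
    exact h
  have h1s : MeasurePreserving e1.symm (πA.prod πB) πd := h1.symm e1
  set e0 := MeasurableEquiv.funUnique {j : Fin d // p j} ℝ with he0
  have h0 : MeasurePreserving e0 πA μ := by
    rw [he0, hπA]
    have h := measurePreserving_funUnique μ {j : Fin d // p j}
    rw [pi_fintype_irrel _ _ (fun _ : {j : Fin d // p j} => μ)] at h
    exact h
  have h0s : MeasurePreserving e0.symm μ πA := h0.symm e0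
  have hupd : ∀ (z : ℝ) (ab : ({j : Fin d // p j} → ℝ) × ({j : Fin d // ¬ p j} → ℝ)),
      Function.update (e1.symm ab) 0 z = e1.symm (e0.symm z, ab.2) := by
    intro z ab
    funext j
    by_cases hj : j = (0 : Fin d)
    · subst hj
      simp [he1, he0, MeasurableEquiv.piEquivPiSubtypeProd, MeasurableEquiv.funUnique,
        Equiv.piEquivPiSubtypeProd, Equiv.funUnique, hp]
    · simp [he1, MeasurableEquiv.piEquivPiSubtypeProd, Equiv.piEquivPiSubtypeProd,
        Function.update_of_ne hj, hp, hj]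
  have hR : ∫ x, g x ∂πd = ∫ z, ∫ b, g (e1.symm (e0.symm z, b)) ∂πB ∂μ := by
    calc ∫ x, g x ∂πd = ∫ ab, g (e1.symm ab) ∂(πA.prod πB) := (h1s.integral_comp' g).symm
      _ = ∫ a, ∫ b, g (e1.symm (a, b)) ∂πB ∂πA :=
          integral_prod _ (integrable_of_Icc
            ((hg.comp e1.symm.measurable).aestronglyMeasurable) fun ab => hb _)
      _ = ∫ z, ∫ b, g (e1.symm (e0.symm z, b)) ∂πB ∂μ :=
          (h0s.integral_comp' fun a => ∫ b, g (e1.symm (a, b)) ∂πB).symm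
  have hL : ∀ z : ℝ, ∫ x, g (Function.update x 0 z) ∂πd
      = ∫ b, g (e1.symm (e0.symm z, b)) ∂πB := by
    intro z
    calc ∫ x, g (Function.update x 0 z) ∂πd
        = ∫ ab, g (Function.update (e1.symm ab) 0 z) ∂(πA.prod πB) :=
          (h1s.integral_comp' fun x => g (Function.update x 0 z)).symm
      _ = ∫ ab : ({j : Fin d // p j} → ℝ) × ({j : Fin d // ¬ p j} → ℝ),
            g (e1.symm (e0.symm z, ab.2)) ∂(πA.prod πB) := by
          apply integral_congr_ae
          exact Filter.Eventually.of_forall fun ab => congrArg g (hupd z ab)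
      _ = ∫ a, ∫ b, g (e1.symm (e0.symm z, b)) ∂πB ∂πA :=
          integral_prod _ (integrable_of_Icc
            ((hg.comp (e1.symm.measurable.comp
              (measurable_const.prodMk measurable_snd))).aestronglyMeasurable)
            fun ab => hb _)
      _ = ∫ b, g (e1.symm (e0.symm z, b)) ∂πB := by
          rw [integral_const]; simp
  rw [hR]
  exact integral_congr_ae (Filter.Eventually.of_forall hL)

lemma meas_upd (d : ℕ) [NeZero d] {φ : (Fin d → ℝ) → ℝ} (hφ : Measurable φ) :
    Measurable fun q : (ℝ × ℝ) × (Fin d → ℝ) =>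
      φ (Function.update (Real.sqrt q.1.2 • q.2) 0 q.1.1) := by
  apply hφ.comp
  apply measurable_pi_lambda
  intro j
  simp only [Function.update_apply]
  split_ifs with h
  · exact measurable_fst.comp measurable_fst
  · exact (Real.continuous_sqrt.measurable.comp (measurable_snd.comp measurable_fst)).mul
      ((measurable_pi_apply j).comp measurable_snd)

lemma measurable_shift (d : ℕ) (c : ℝ) :
    Measurable fun x : Fin d → ℝ => (fun j : Fin d => if (j : ℕ) = 0 then c else 0) + x :=
  measurable_pi_lambda _ fun j => (measurable_pi_apply j).const_add _

set_option maxHeartbeats 2000000 in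
lemma key (d : ℕ) [NeZero d] (c : ℝ) {φ : (Fin d → ℝ) → ℝ} (hφ : Measurable φ)
    (hb : ∀ y, φ y ∈ Set.Icc (0 : ℝ) 1) :
    ∃ ψ : ℝ × ℝ → ℝ, Measurable ψ ∧ (∀ q, ψ q ∈ Set.Icc (0 : ℝ) 1) ∧
      (∫ q, ψ q ∂pairP = ∫ y, φ y ∂(SLM d 1)) ∧
      (∫ q, ψ q ∂(pairQ c) = ∫ y, φ y
        ∂(Measure.map (fun x => (fun j : Fin d => if (j : ℕ) = 0 then c else 0) + x)
          (SLM d 1))) := by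
  set v : Fin d → ℝ := fun j : Fin d => if (j : ℕ) = 0 then c else 0 with hv
  set πd : Measure (Fin d → ℝ) := Measure.pi fun _ : Fin d => gaussianReal 0 1 with hπd
  have hgp : gaussPi d 1 = πd := gaussPi_eq d
  haveI : IsProbabilityMeasure πd := by rw [hπd]; infer_instance
  set ψ : ℝ × ℝ → ℝ :=
    fun q => ∫ x, φ (Function.update (Real.sqrt q.2 • x) 0 q.1) ∂πd with hψ
  have hFmeas := meas_upd d hφ
  have hψm : Measurable ψ := hFmeas.stronglyMeasurable.integral_prod_right'.measurable
  have hψb : ∀ q, ψ q ∈ Set.Icc (0 : ℝ) 1 := by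
    intro q
    have heq : (fun x : Fin d → ℝ => φ (Function.update (Real.sqrt q.2 • x) 0 q.1)) =
        ((fun p : (ℝ × ℝ) × (Fin d → ℝ) =>
          φ (Function.update (Real.sqrt p.1.2 • p.2) 0 p.1.1)) ∘ fun x => (q, x)) := rfl
    have hm : Measurable fun x : Fin d → ℝ =>
        φ (Function.update (Real.sqrt q.2 • x) 0 q.1) := by
      rw [heq]; exact hFmeas.comp measurable_prodMk_left
    exact ⟨integral_nonneg fun x => (hb _).1,
      integral_le_one_of hm.aestronglyMeasurable fun x => hb _⟩
  -- pointwise identities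
  have hid1 : ∀ (w z : ℝ) (x : Fin d → ℝ),
      Function.update (Real.sqrt w • x) 0 (Real.sqrt w * z)
        = Real.sqrt w • Function.update x 0 z := by
    intro w z x
    funext j
    by_cases hj : j = (0 : Fin d)
    · subst hj; simp
    · simp [Function.update_of_ne hj]
  have hid2 : ∀ (w z : ℝ) (x : Fin d → ℝ),
      Function.update (Real.sqrt w • x) 0 (c + Real.sqrt w * z)
        = v + Real.sqrt w • Function.update x 0 z := by
    intro w z x
    have h0v : ((0 : Fin d) : ℕ) = 0 := by simp
    funext j
    by_cases hj : (j : ℕ) = 0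
    · have hj0 : j = (0 : Fin d) := Fin.ext (by rw [hj, h0v])
      subst hj0
      simp [hv, h0v]
    · have hj0 : j ≠ (0 : Fin d) := fun h => hj (by rw [h, h0v])
      simp [hv, Function.update_of_ne hj0, hj, hj0]
  -- measurability of auxiliary maps
  have hsmulw : ∀ w : ℝ, Measurable fun y : Fin d → ℝ => Real.sqrt w • y := fun w =>
    measurable_pi_lambda _ fun j => (measurable_pi_apply j).const_mul _
  have haddv : Measurable fun y : Fin d → ℝ => v + y :=
    measurable_pi_lambda _ fun j => (measurable_pi_apply j).const_add _
  refine ⟨ψ, hψm, hψb, ?_, ?_⟩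
  · -- P side
    have eP1 : ∫ q, ψ q ∂pairP
        = ∫ p : ℝ × ℝ, ψ (Real.sqrt p.1 * p.2, p.1) ∂(expOne.prod (gaussianReal 0 1)) := by
      rw [pairP]
      exact integral_map measurable_pairP_fun.aemeasurable hψm.aestronglyMeasurable
    have eP2 : ∫ p : ℝ × ℝ, ψ (Real.sqrt p.1 * p.2, p.1) ∂(expOne.prod (gaussianReal 0 1))
        = ∫ w, ∫ z, ψ (Real.sqrt w * z, w) ∂(gaussianReal 0 1) ∂expOne :=
      integral_prod _ (integrable_of_Icc
        ((hψm.comp measurable_pairP_fun).aestronglyMeasurable) fun p => hψb _)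
    have eP3 : ∫ y, φ y ∂(SLM d 1)
        = ∫ p : ℝ × (Fin d → ℝ), φ (Real.sqrt p.1 • p.2) ∂(expOne.prod πd) := by
      rw [SLM, hgp]
      exact integral_map (measurable_smul_map d).aemeasurable hφ.aestronglyMeasurable
    have eP4 : ∫ p : ℝ × (Fin d → ℝ), φ (Real.sqrt p.1 • p.2) ∂(expOne.prod πd)
        = ∫ w, ∫ x, φ (Real.sqrt w • x) ∂πd ∂expOne :=
      integral_prod _ (integrable_of_Icc
        ((hφ.comp (measurable_smul_map d)).aestronglyMeasurable) fun p => hb _)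
    rw [eP1, eP2, eP3, eP4]
    refine integral_congr_ae (Filter.Eventually.of_forall fun w => ?_)
    have hinner : ∀ z : ℝ, ψ (Real.sqrt w * z, w)
        = ∫ x, φ (Real.sqrt w • Function.update x 0 z) ∂πd := by
      intro z
      simp only [hψ]
      exact integral_congr_ae (Filter.Eventually.of_forall fun x =>
        congrArg φ (hid1 w z x))
    calc ∫ z, ψ (Real.sqrt w * z, w) ∂(gaussianReal 0 1)
        = ∫ z, ∫ x, φ (Real.sqrt w • Function.update x 0 z) ∂πd ∂(gaussianReal 0 1) :=
          integral_congr_ae (Filter.Eventually.of_forall hinner)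
      _ = ∫ x, φ (Real.sqrt w • x) ∂πd :=
          refresh d (hφ.comp (hsmulw w)) fun y => hb _
  · -- Q side
    have eQ1 : ∫ q, ψ q ∂(pairQ c)
        = ∫ p : ℝ × ℝ, ψ (c + Real.sqrt p.1 * p.2, p.1) ∂(expOne.prod (gaussianReal 0 1)) := by
      rw [pairQ]
      exact integral_map (measurable_pairQ_fun c).aemeasurable hψm.aestronglyMeasurable
    have eQ2 : ∫ p : ℝ × ℝ, ψ (c + Real.sqrt p.1 * p.2, p.1) ∂(expOne.prod (gaussianReal 0 1))
        = ∫ w, ∫ z, ψ (c + Real.sqrt w * z, w) ∂(gaussianReal 0 1) ∂expOne :=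
      integral_prod _ (integrable_of_Icc
        ((hψm.comp (measurable_pairQ_fun c)).aestronglyMeasurable) fun p => hψb _)
    have eQ3 : ∫ y, φ y
          ∂(Measure.map (fun x => (fun j : Fin d => if (j : ℕ) = 0 then c else 0) + x)
            (SLM d 1))
        = ∫ y, φ (v + y) ∂(SLM d 1) :=
      integral_map (measurable_shift d c).aemeasurable hφ.aestronglyMeasurable
    have eQ4 : ∫ y, φ (v + y) ∂(SLM d 1)
        = ∫ p : ℝ × (Fin d → ℝ), φ (v + Real.sqrt p.1 • p.2) ∂(expOne.prod πd) := by
      rw [SLM, hgp]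
      exact integral_map (measurable_smul_map d).aemeasurable
        (hφ.comp haddv).aestronglyMeasurable
    have eQ5 : ∫ p : ℝ × (Fin d → ℝ), φ (v + Real.sqrt p.1 • p.2) ∂(expOne.prod πd)
        = ∫ w, ∫ x, φ (v + Real.sqrt w • x) ∂πd ∂expOne :=
      integral_prod _ (integrable_of_Icc
        (((hφ.comp haddv).comp (measurable_smul_map d)).aestronglyMeasurable)
        fun p => hb _)
    rw [eQ1, eQ2, eQ3, eQ4, eQ5]
    refine integral_congr_ae (Filter.Eventually.of_forall fun w => ?_)
    have hinner : ∀ z : ℝ, ψ (c + Real.sqrt w * z, w)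
        = ∫ x, φ (v + Real.sqrt w • Function.update x 0 z) ∂πd := by
      intro z
      simp only [hψ]
      exact integral_congr_ae (Filter.Eventually.of_forall fun x =>
        congrArg φ (hid2 w z x))
    calc ∫ z, ψ (c + Real.sqrt w * z, w) ∂(gaussianReal 0 1)
        = ∫ z, ∫ x, φ (v + Real.sqrt w • Function.update x 0 z) ∂πd ∂(gaussianReal 0 1) :=
          integral_congr_ae (Filter.Eventually.of_forall hinner)
      _ = ∫ x, φ (v + Real.sqrt w • x) ∂πd :=
          refresh d (hφ.comp (haddv.comp (hsmulw w))) fun y => hb _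

end TdcAux

end Aux

/-- For every `d ≥ 1`, `c > 0` and `δ ∈ (0,1)`, `T_{d,c} ≥ β_c` and
`T_{d,c,δ} ≥ β_{c,δ}` on `[0,1]`. -/
theorem Tdc_ge_betaC (d : ℕ) (hd : 1 ≤ d) (c δ : ℝ) (hc : 0 < c)
    (hδ : δ ∈ Set.Ioo (0 : ℝ) 1) :
    ∀ α ∈ Set.Icc (0 : ℝ) 1, betaC c α ≤ Tdc d c α ∧ betaCD c δ α ≤ Tdcd d c δ α := by
  haveI : NeZero d := ⟨by omega⟩
  have key0 : ∀ α' : ℝ, 0 ≤ α' → betaC c α' ≤ Tdc d c α' := by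
    intro α' hα'
    unfold betaC Tdc tradeOff
    apply le_csInf
    · refine ⟨1 - ∫ _ω, (0 : ℝ)
          ∂(Measure.map (fun x => (fun j : Fin d => if (j : ℕ) = 0 then c else 0) + x)
            (SLM d 1)),
        fun _ => 0, measurable_const, fun ω => ⟨le_refl 0, zero_le_one⟩, ?_, rfl⟩
      simpa using hα'
    · rintro b ⟨φ, hφm, hφb, hφα, rfl⟩
      obtain ⟨ψ, hψm, hψb, hP, hQ⟩ := TdcAux.key d c hφm hφb
      apply csInf_le
      · refine ⟨0, ?_⟩
        rintro b' ⟨ψ', hm', hb', -, rfl⟩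
        have h1 : ∫ ω, ψ' ω ∂(pairQ c) ≤ 1 :=
          TdcAux.integral_le_one_of hm'.aestronglyMeasurable hb'
        linarith
      · exact ⟨ψ, hψm, hψb, by rw [hP]; exact hφα, by rw [hQ]⟩
  rintro α ⟨hα0, hα1⟩
  refine ⟨key0 α hα0, ?_⟩
  unfold betaCD Tdcd
  split_ifs with h
  · have h1δ : (0 : ℝ) < 1 - δ := by linarith [hδ.2]
    exact mul_le_mul_of_nonneg_left (key0 _ (div_nonneg hα0 h1δ.le)) h1δ.le
  · exact le_refl 0
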